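/- Let K be a field, S a finite subset of K, c ∈ K, and k ≥ 1 an integer. Let c₁,…,c_{2k} be nonzero elements of K. Let T_{2k} be the number of 2k-tuples (x₁,…,x_{2k}) ∈ S^{2k} with c₁x₁ + ⋯ + c_{2k}x_{2k} = c, and let J_{2k} be the number of 2k-tuples (x₁,…,x_{2k}) ∈ S^{2k} with x₁ + ⋯ + x_k = x_{k+1} + ⋯ + x_{2k}. Then T_{2k} ≤ J_{2k}. -/

import Mathlib

open Finset

variable {K : Type} [Field K]

noncomputable def cnt (S : Finset K) (ι : Type) [Fintype ι] (d : ι → K) (c : K) : ℕ :=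
  Nat.card {x : ι → K // (∀ i, x i ∈ S) ∧ ∑ i, d i * x i = c}

lemma cnt_eq_card (S : Finset K) (ι : Type) [Fintype ι] [DecidableEq ι] [DecidableEq K]
    (d : ι → K) (c : K) :
    cnt S ι d c =
      ((Fintype.piFinset fun _ : ι => S).filter fun x => ∑ i, d i * x i = c).card := by
  rw [← Nat.card_eq_finsetCard]
  exact Nat.card_congr (Equiv.subtypeEquivRight (by
    intro x
    simp [Fintype.mem_piFinset, and_comm]))

/-- reindexing invariance -/
lemma cnt_reindex (S : Finset K) {ι κ : Type} [Fintype ι] [Fintype κ] (e : ι ≃ κ)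
    (d : κ → K) (c : K) : cnt S ι (d ∘ e) c = cnt S κ d c := by
  apply Nat.card_congr
  refine ⟨fun x => ⟨x.1 ∘ e.symm, ?_, ?_⟩, fun y => ⟨y.1 ∘ e, ?_, ?_⟩, ?_, ?_⟩
  · intro i; exact x.2.1 _
  · calc ∑ i : κ, d i * (x.1 ∘ e.symm) i = ∑ i : ι, (d ∘ e) i * x.1 i := by
          rw [← Equiv.sum_comp e (fun i => d i * (x.1 ∘ e.symm) i)]; simp
      _ = c := x.2.2
  · intro i; exact y.2.1 _
  · calc ∑ i : ι, (d ∘ e) i * (y.1 ∘ e) i = ∑ i : κ, d i * y.1 i := by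
          rw [← Equiv.sum_comp e (fun i => d i * y.1 i)]; simp
      _ = c := y.2.2
  · intro x; ext i; simp
  · intro y; ext i; simp

section CS
variable (S : Finset K) {ι κ : Type} [Fintype ι] [Fintype κ] [DecidableEq ι] [DecidableEq κ]
    [DecidableEq K] (d : ι → K) (e : κ → K) (c : K)

lemma cnt_sum_eq :
    cnt S (ι ⊕ κ) (Sum.elim d e) c =
      (((Fintype.piFinset fun _ : ι => S) ×ˢ (Fintype.piFinset fun _ : κ => S)).filter
        fun p => (∑ i, d i * p.1 i) + (∑ j, e j * p.2 j) = c).card := by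
  have h1 : cnt S (ι ⊕ κ) (Sum.elim d e) c = Nat.card {p : (ι → K) × (κ → K) //
      ((∀ i, p.1 i ∈ S) ∧ (∀ j, p.2 j ∈ S)) ∧ (∑ i, d i * p.1 i) + (∑ j, e j * p.2 j) = c} := by
    refine Nat.card_congr ⟨fun x => ⟨(x.1 ∘ Sum.inl, x.1 ∘ Sum.inr), ?_⟩,
      fun p => ⟨Sum.elim p.1.1 p.1.2, ?_⟩, ?_, ?_⟩
    · obtain ⟨x, hx, hs⟩ := x
      refine ⟨⟨fun i => hx _, fun j => hx _⟩, ?_⟩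
      rw [Fintype.sum_sum_type] at hs
      simpa using hs
    · obtain ⟨⟨x, y⟩, ⟨h1, h2⟩, hs⟩ := p
      constructor
      · rintro (i | j); exacts [h1 i, h2 j]
      · rw [Fintype.sum_sum_type]
        simpa using hs
    · rintro ⟨x, hx⟩; ext (i | j) <;> rfl
    · rintro ⟨⟨x, y⟩, h⟩; rfl
  rw [h1, ← Nat.card_eq_finsetCard]
  refine Nat.card_congr (Equiv.subtypeEquivRight ?_)
  rintro ⟨x, y⟩
  simp [Fintype.mem_piFinset, and_assoc]

lemma cnt_sum_fiber :
    cnt S (ι ⊕ κ) (Sum.elim d e) c =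
      ∑ t ∈ (Fintype.piFinset fun _ : ι => S).image (fun x => ∑ i, d i * x i),
        ((Fintype.piFinset fun _ : ι => S).filter fun x => ∑ i, d i * x i = t).card *
        ((Fintype.piFinset fun _ : κ => S).filter fun y => ∑ j, e j * y j = c - t).card := by
  rw [cnt_sum_eq]
  rw [Finset.card_eq_sum_card_fiberwise (f := fun p => ∑ i, d i * p.1 i)
    (t := (Fintype.piFinset fun _ : ι => S).image (fun x => ∑ i, d i * x i))
    (fun p hp => by
      simp only [mem_coe, mem_filter, mem_product] at hp
      exact mem_image_of_mem _ hp.1.1)]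
  refine Finset.sum_congr rfl fun t ht => ?_
  rw [Finset.filter_filter, ← Finset.card_product, ← Finset.filter_product]
  congr 1
  apply Finset.filter_congr
  rintro ⟨x, y⟩ _
  constructor
  · rintro ⟨h1, h2⟩
    exact ⟨h2, by rw [← h1, ← h2]; ring⟩
  · rintro ⟨h1, h2⟩
    exact ⟨by rw [h1, h2]; ring, h1⟩

lemma cnt_energy_eq :
    cnt S (ι ⊕ ι) (Sum.elim d fun i => - d i) 0 =
      ∑ t ∈ (Fintype.piFinset fun _ : ι => S).image (fun x => ∑ i, d i * x i),
        ((Fintype.piFinset fun _ : ι => S).filter fun x => ∑ i, d i * x i = t).card ^ 2 := by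
  rw [cnt_sum_fiber]
  refine Finset.sum_congr rfl fun t ht => ?_
  have hfe : (Fintype.piFinset fun _ : ι => S).filter
      (fun y => ∑ j, (fun i => - d i) j * y j = 0 - t) =
      (Fintype.piFinset fun _ : ι => S).filter (fun x => ∑ i, d i * x i = t) := by
    apply Finset.filter_congr
    intro y _
    simp only [neg_mul, Finset.sum_neg_distrib, zero_sub, neg_inj]
  rw [hfe, sq]

lemma cnt_cs :
    cnt S (ι ⊕ κ) (Sum.elim d e) c ^ 2 ≤
      cnt S (ι ⊕ ι) (Sum.elim d fun i => - d i) 0 *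
      cnt S (κ ⊕ κ) (Sum.elim e fun j => - e j) 0 := by
  rw [cnt_sum_fiber S d e c, cnt_energy_eq S d, cnt_energy_eq S e]
  set r : K → ℕ := fun t => ((Fintype.piFinset fun _ : ι => S).filter
    fun x => ∑ i, d i * x i = t).card with hr
  set s : K → ℕ := fun t => ((Fintype.piFinset fun _ : κ => S).filter
    fun y => ∑ j, e j * y j = t).card with hs
  set I := (Fintype.piFinset fun _ : ι => S).image (fun x => ∑ i, d i * x i) with hI
  set J := (Fintype.piFinset fun _ : κ => S).image (fun y => ∑ j, e j * y j) with hJ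
  calc (∑ t ∈ I, r t * s (c - t)) ^ 2
      ≤ (∑ t ∈ I, r t ^ 2) * ∑ t ∈ I, s (c - t) ^ 2 :=
        Finset.sum_mul_sq_le_sq_mul_sq I r (fun t => s (c - t))
    _ ≤ (∑ t ∈ I, r t ^ 2) * ∑ u ∈ J, s u ^ 2 := by
        refine Nat.mul_le_mul_left _ ?_
        have h1 : ∑ t ∈ I, s (c - t) ^ 2 = ∑ u ∈ I.image (fun t => c - t), s u ^ 2 := by
          rw [Finset.sum_image (fun x _ y _ h => sub_right_injective h)]
        rw [h1]
        refine Finset.sum_le_sum_of_ne_zero fun u hu hne => ?_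
        have hs0 : s u ≠ 0 := by
          intro h0
          exact hne (by rw [h0]; ring)
        obtain ⟨y, hy⟩ := Finset.card_ne_zero.mp hs0
        simp only [mem_filter] at hy
        exact hy.2 ▸ Finset.mem_image_of_mem _ hy.1
end CS

lemma cnt_smul (S : Finset K) {ι : Type} [Fintype ι] (v : K) (hv : v ≠ 0) (d : ι → K) (c : K) :
    cnt S ι (fun i => v * d i) (v * c) = cnt S ι d c := by
  apply Nat.card_congr
  refine Equiv.subtypeEquivRight fun x => ?_
  have h : ∑ i, (v * d i) * x i = v * ∑ i, d i * x i := by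
    rw [Finset.mul_sum]; congr 1; ext i; ring
  rw [h]
  constructor
  · rintro ⟨h1, h2⟩; exact ⟨h1, mul_left_cancel₀ hv h2⟩
  · rintro ⟨h1, h2⟩; exact ⟨h1, by rw [h2]⟩

lemma exists_perm_pure (k : ℕ) (u : Fin k ⊕ Fin k → K)
    (hp : ∀ j : Fin k, (u (Sum.inl j) = 1 ∧ u (Sum.inr j) = -1) ∨
      (u (Sum.inl j) = -1 ∧ u (Sum.inr j) = 1)) :
    ∃ σ : Equiv.Perm (Fin k ⊕ Fin k),
      (Sum.elim (fun _ => (1:K)) (fun _ => (-1:K))) ∘ σ = u := by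
  classical
  let f : Fin k ⊕ Fin k → Fin k ⊕ Fin k := fun x =>
    match x with
    | Sum.inl j => if u (Sum.inl j) = 1 then Sum.inl j else Sum.inr j
    | Sum.inr j => if u (Sum.inl j) = 1 then Sum.inr j else Sum.inl j
  have hl : ∀ j, f (Sum.inl j) = if u (Sum.inl j) = 1 then Sum.inl j else Sum.inr j :=
    fun _ => rfl
  have hr : ∀ j, f (Sum.inr j) = if u (Sum.inl j) = 1 then Sum.inr j else Sum.inl j :=
    fun _ => rfl
  have hinv : Function.Involutive f := by
    rintro (j | j) <;> by_cases h : u (Sum.inl j) = 1 <;>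
      simp only [hl, hr, h, if_true, if_false] <;> simp [hl, hr, h]
  refine ⟨Function.Involutive.toPerm f hinv, ?_⟩
  have hfp : ∀ y, Function.Involutive.toPerm f hinv y = f y := fun _ => rfl
  funext x
  rcases x with j | j <;>
    by_cases h : u (Sum.inl j) = 1 <;>
      simp only [Function.comp_apply, hfp, hl, hr, h, if_true, if_false,
        Sum.elim_inl, Sum.elim_inr] <;>
    rcases hp j with ⟨h1, h2⟩ | ⟨h1, h2⟩ <;> simp_all

/-- energy-type count of a coefficient vector -/
noncomputable def gcnt (S : Finset K) (k : ℕ) (d : Fin k → K) : ℕ :=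
  cnt S (Fin k ⊕ Fin k) (Sum.elim d fun i => - d i) 0

lemma gcnt_of_comp (S : Finset K) {k : ℕ} {κ : Type} [Fintype κ] (e : Fin k ≃ κ) (d : κ → K) :
    gcnt S k (d ∘ e) = cnt S (κ ⊕ κ) (Sum.elim d fun i => - d i) 0 := by
  rw [gcnt, ← cnt_reindex S (Equiv.sumCongr e e) (Sum.elim d fun i => - d i) 0]
  congr 1
  funext x
  cases x <;> rfl

lemma gcnt_pure (S : Finset K) (k : ℕ) (d : Fin k → K) (v : K) (hv : v ≠ 0)
    (hd : ∀ i, d i = v ∨ d i = -v) :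
    gcnt S k d = cnt S (Fin k ⊕ Fin k) (Sum.elim (fun _ => (1:K)) fun _ => (-1:K)) 0 := by
  set M : Fin k ⊕ Fin k → K := Sum.elim d fun i => - d i with hM
  set u : Fin k ⊕ Fin k → K := fun i => v⁻¹ * M i with hu
  have h1 : gcnt S k d = cnt S (Fin k ⊕ Fin k) u 0 := by
    rw [gcnt, ← cnt_smul S v hv u 0]
    congr 1
    · funext i
      rw [hu]
      field_simp
      rfl
    · ring
  obtain ⟨σ, hσ⟩ := exists_perm_pure k u (fun j => by
    rcases hd j with h | h
    · left
      constructor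
      · simp [hu, hM, h, inv_mul_cancel₀ hv]
      · simp [hu, hM, h, inv_mul_cancel₀ hv]
    · right
      constructor
      · simp [hu, hM, h, inv_mul_cancel₀ hv]
      · simp [hu, hM, h, inv_mul_cancel₀ hv])
  rw [h1, ← hσ, cnt_reindex S σ _ 0]

lemma cnt_J (S : Finset K) (k : ℕ) :
    cnt S (Fin k ⊕ Fin k) (Sum.elim (fun _ => (1:K)) fun _ => (-1:K)) 0 =
      Nat.card {x : Fin (2 * k) → K //
        (∀ i, x i ∈ S) ∧
        ∑ i ∈ Finset.univ.filter (fun i : Fin (2 * k) => (i : ℕ) < k), x i =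
          ∑ i ∈ Finset.univ.filter (fun i : Fin (2 * k) => ¬ (i : ℕ) < k), x i} := by
  classical
  set e : Fin k ⊕ Fin k ≃ Fin (2 * k) :=
    finSumFinEquiv.trans (finCongr (by omega : k + k = 2 * k)) with he
  set w : Fin (2 * k) → K := fun i => if (i : ℕ) < k then 1 else -1 with hwdef
  have hw : w ∘ e = Sum.elim (fun _ => (1:K)) fun _ => (-1:K) := by
    funext x
    rcases x with j | j
    · have hval : ((e (Sum.inl j)) : ℕ) = (j : ℕ) := by simp [he]
      simp only [Function.comp_apply, Sum.elim_inl, hwdef]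
      rw [if_pos (by rw [hval]; exact j.isLt)]
    · have hval : ((e (Sum.inr j)) : ℕ) = k + (j : ℕ) := by simp [he]; omega
      simp only [Function.comp_apply, Sum.elim_inr, hwdef]
      rw [if_neg (by rw [hval]; omega)]
  rw [← hw, cnt_reindex S e w 0]
  apply Nat.card_congr
  refine Equiv.subtypeEquivRight fun x => ?_
  have hsum : ∑ i, w i * x i =
      (∑ i ∈ Finset.univ.filter (fun i : Fin (2 * k) => (i : ℕ) < k), x i) -
        ∑ i ∈ Finset.univ.filter (fun i : Fin (2 * k) => ¬ (i : ℕ) < k), x i := by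
    rw [← Finset.sum_filter_add_sum_filter_not Finset.univ
      (fun i : Fin (2*k) => (i : ℕ) < k) (fun i => w i * x i), sub_eq_add_neg,
      ← Finset.sum_neg_distrib]
    congr 1
    · refine Finset.sum_congr rfl fun i hi => ?_
      simp only [mem_filter] at hi
      simp [hwdef, hi.2]
    · refine Finset.sum_congr rfl fun i hi => ?_
      simp only [mem_filter] at hi
      simp [hwdef, hi.2]
  rw [hsum]
  simp [sub_eq_zero]

lemma gcnt_cs' (S : Finset K) (k : ℕ) (dm : Fin k → K) (P : Finset (Fin k ⊕ Fin k))
    (hP : P.card = k) (eP eQ : Fin k → K)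
    (heP : ∃ σ : Fin k ≃ {x // x ∈ P}, eP = (fun x => Sum.elim dm (fun i => - dm i) x.1) ∘ σ)
    (heQ : ∃ σ : Fin k ≃ {x // ¬ x ∈ P}, eQ = (fun x => Sum.elim dm (fun i => - dm i) x.1) ∘ σ) :
    gcnt S k dm ^ 2 ≤ gcnt S k eP * gcnt S k eQ := by
  classical
  obtain ⟨σ1, hσ1⟩ := heP
  obtain ⟨σ2, hσ2⟩ := heQ
  set M : Fin k ⊕ Fin k → K := Sum.elim dm fun i => - dm i with hM
  set f : {x // x ∈ P} → K := fun x => M x.1 with hf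
  set g : {x // ¬ x ∈ P} → K := fun x => M x.1 with hg
  have h1 : gcnt S k dm = cnt S ({x // x ∈ P} ⊕ {x // ¬ x ∈ P}) (Sum.elim f g) 0 := by
    rw [gcnt, ← cnt_reindex S (Equiv.sumCompl (· ∈ P)) M 0]
    congr 1
    funext x
    rcases x with a | a <;> simp [hf, hg]
  have h2 : gcnt S k eP = cnt S ({x // x ∈ P} ⊕ {x // x ∈ P}) (Sum.elim f fun x => - f x) 0 := by
    rw [hσ1]
    exact gcnt_of_comp S σ1 f
  have h3 : gcnt S k eQ =
      cnt S ({x // ¬ x ∈ P} ⊕ {x // ¬ x ∈ P}) (Sum.elim g fun x => - g x) 0 := by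
    rw [hσ2]
    exact gcnt_of_comp S σ2 g
  rw [h1, h2, h3]
  exact cnt_cs S f g 0
lemma gcnt_le_J (S : Finset K) (k : ℕ) (hk : 1 ≤ k) (V : Finset K)
    (hV0 : (0:K) ∉ V) (hVneg : ∀ v ∈ V, -v ∈ V)
    (d : Fin k → K) (hd : ∀ i, d i ∈ V) :
    gcnt S k d ≤ cnt S (Fin k ⊕ Fin k) (Sum.elim (fun _ => (1:K)) fun _ => (-1:K)) 0 := by
  classical
  have hfin : Nonempty (Fin k) := ⟨⟨0, hk⟩⟩
  set 𝒟 : Finset (Fin k → K) := Fintype.piFinset fun _ => V with h𝒟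
  have hdD : d ∈ 𝒟 := by simp [h𝒟, Fintype.mem_piFinset]; exact hd
  obtain ⟨d₀, hd₀D, hmax⟩ := 𝒟.exists_max_image (gcnt S k) ⟨d, hdD⟩
  set Gm := gcnt S k d₀ with hGm
  by_cases hGm0 : Gm = 0
  · exact le_trans (hmax d hdD) (by omega)
  set ℳ : Finset (Fin k → K) := 𝒟.filter (fun d' => gcnt S k d' = Gm) with hℳ
  set mea : (Fin k → K) → ℕ := fun d' =>
    Finset.univ.sup fun i => (Finset.univ.filter
      (fun j => d' j = d' i ∨ d' j = - d' i)).card with hmea_def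
  obtain ⟨dm, hdmM, hmea⟩ := ℳ.exists_max_image mea ⟨d₀, by simp [hℳ, hd₀D, hGm]⟩
  have hdmD : dm ∈ 𝒟 := (Finset.mem_filter.mp hdmM).1
  have hdmG : gcnt S k dm = Gm := (Finset.mem_filter.mp hdmM).2
  have hdmV : ∀ i, dm i ∈ V := by
    intro i
    have := Fintype.mem_piFinset.mp hdmD
    exact this i
  -- the maximal class of dm
  obtain ⟨i₀, _, hi₀⟩ := Finset.exists_mem_eq_sup Finset.univ univ_nonempty
    (fun i => (Finset.univ.filter (fun j => dm j = dm i ∨ dm j = - dm i)).card)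
  set v := dm i₀ with hv
  have hvV : v ∈ V := hdmV i₀
  have hv0 : v ≠ 0 := fun h => hV0 (h ▸ hvV)
  set A : Finset (Fin k) := Finset.univ.filter (fun j => dm j = v ∨ dm j = - v) with hA
  have hmeadm : mea dm = A.card := hi₀
  set m₀ := A.card with hm₀
  have hm₀1 : 1 ≤ m₀ := Finset.card_pos.mpr ⟨i₀, by simp [hA, hv]⟩
  have hm₀k : m₀ ≤ k := le_trans (Finset.card_le_card (Finset.filter_subset _ _)) (by simp)
  by_cases hcase : m₀ = k
  -- pure case : done
  · have hAuniv : A = Finset.univ := Finset.eq_univ_of_card A (by simp [← hm₀, hcase])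
    have hpure : ∀ i, dm i = v ∨ dm i = - v := fun i => by
      have : i ∈ A := hAuniv ▸ Finset.mem_univ i
      simpa [hA] using this
    calc gcnt S k d ≤ Gm := hmax d hdD
      _ = gcnt S k dm := hdmG.symm
      _ = cnt S (Fin k ⊕ Fin k) (Sum.elim (fun _ => (1:K)) fun _ => (-1:K)) 0 := gcnt_pure S k dm v hv0 hpure
  -- otherwise: contradiction
  · exfalso
    have hm₀lt : m₀ < k := lt_of_le_of_ne hm₀k hcase
    set M : Fin k ⊕ Fin k → K := Sum.elim dm (fun i => - dm i) with hM
    have hMV : ∀ x, M x ∈ V := by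
      rintro (j | j)
      · exact hdmV j
      · exact hVneg _ (hdmV j)
    set Ahat : Finset (Fin k ⊕ Fin k) := A.disjSum A with hAhat
    have hAhatcard : Ahat.card = 2 * m₀ := by
      rw [hAhat, Finset.card_disjSum]; omega
    have hAhatclass : ∀ x ∈ Ahat, M x = v ∨ M x = - v := by
      rintro (j | j) hx
      · have hj : j ∈ A := by simpa [hAhat] using hx
        simpa [hM] using (Finset.mem_filter.mp hj).2
      · have hj : j ∈ A := by simpa [hAhat] using hx
        rcases (Finset.mem_filter.mp hj).2 with h | h
        · right; simp [hM, h]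
        · left; simp [hM, h]
    set s := min (2 * m₀) k with hs
    have hsm₀ : m₀ < s := by omega
    have hsAhat : s ≤ Ahat.card := by omega
    obtain ⟨B, hBAhat, hBcard⟩ := Finset.exists_subset_card_eq hsAhat
    have hcompl : (Ahatᶜ : Finset (Fin k ⊕ Fin k)).card = 2 * k - 2 * m₀ := by
      rw [Finset.card_compl, hAhatcard]
      simp
      omega
    obtain ⟨C, hCc, hCcard⟩ := Finset.exists_subset_card_eq
      (show k - s ≤ (Ahatᶜ : Finset (Fin k ⊕ Fin k)).card by omega)
    set P := B ∪ C with hP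
    have hdisj : Disjoint B C := by
      refine Finset.disjoint_left.mpr fun x hxB hxC => ?_
      exact (Finset.mem_compl.mp (hCc hxC)) (hBAhat hxB)
    have hPcard : P.card = k := by
      rw [hP, Finset.card_union_of_disjoint hdisj, hBcard, hCcard]; omega
    have hQcard : Fintype.card {x // ¬ x ∈ P} = k := by
      rw [Fintype.card_subtype_compl]
      simp [hPcard]
    set σP : Fin k ≃ {x // x ∈ P} := (P.equivFinOfCardEq hPcard).symm with hσP
    set σQ : Fin k ≃ {x // ¬ x ∈ P} := (Fintype.equivFinOfCardEq hQcard).symm with hσQ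
    set eP : Fin k → K := (fun x : {x // x ∈ P} => M x.1) ∘ σP with heP
    set eQ : Fin k → K := (fun x : {x // ¬ x ∈ P} => M x.1) ∘ σQ with heQ
    have hePD : eP ∈ 𝒟 := Fintype.mem_piFinset.mpr fun i => hMV _
    have heQD : eQ ∈ 𝒟 := Fintype.mem_piFinset.mpr fun i => hMV _
    have hkey : gcnt S k dm ^ 2 ≤ gcnt S k eP * gcnt S k eQ :=
      gcnt_cs' S k dm P hPcard eP eQ ⟨σP, rfl⟩ ⟨σQ, rfl⟩
    have hePM : eP ∈ ℳ := by
      have h1 : Gm ^ 2 ≤ gcnt S k eP * Gm := by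
        calc Gm ^ 2 = gcnt S k dm ^ 2 := by rw [hdmG]
          _ ≤ gcnt S k eP * gcnt S k eQ := hkey
          _ ≤ gcnt S k eP * Gm := Nat.mul_le_mul_left _ (hmax eQ heQD)
      have h2 : Gm ≤ gcnt S k eP := by
        have := h1
        rw [pow_two] at this
        exact Nat.le_of_mul_le_mul_right this (Nat.pos_of_ne_zero hGm0)
      exact Finset.mem_filter.mpr ⟨hePD, le_antisymm (hmax eP hePD) h2⟩
    -- eP has a class of size ≥ s
    have hBne : B.Nonempty := Finset.card_pos.mp (by omega)
    -- the positions of eP corresponding to B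
    have hclassP : ∀ j : Fin k, (σP j : Fin k ⊕ Fin k) ∈ B → (eP j = v ∨ eP j = - v) := by
      intro j hj
      exact hAhatclass _ (hBAhat hj)
    set A' : Finset (Fin k) := Finset.univ.filter (fun j => eP j = v ∨ eP j = - v) with hA'
    have hA's : s ≤ A'.card := by
      rw [← hBcard]
      refine Finset.card_le_card_of_injOn
        (fun b => if h : b ∈ P then σP.symm ⟨b, h⟩ else i₀) ?_ ?_
      · intro b hb
        have hbP : b ∈ P := Finset.mem_union_left _ hb
        simp only [dif_pos hbP]
        refine Finset.mem_filter.mpr ⟨Finset.mem_univ _, ?_⟩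
        have : (σP (σP.symm ⟨b, hbP⟩) : Fin k ⊕ Fin k) = b := by
          rw [Equiv.apply_symm_apply]
        refine hclassP _ ?_
        rw [this]
        exact hb
      · intro b hb b' hb' heq
        have hbP : b ∈ P := Finset.mem_union_left _ hb
        have hbP' : b' ∈ P := Finset.mem_union_left _ hb'
        simp only [dif_pos hbP, dif_pos hbP'] at heq
        have := σP.symm.injective heq
        exact congrArg Subtype.val this
    have hA'ne : A'.Nonempty := Finset.card_pos.mp (by omega)
    obtain ⟨i₁, hi₁⟩ := hA'ne
    have hi₁v : eP i₁ = v ∨ eP i₁ = - v := (Finset.mem_filter.mp hi₁).2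
    have hsub : A' ⊆ Finset.univ.filter (fun j => eP j = eP i₁ ∨ eP j = - eP i₁) := by
      intro j hj
      have hjv := (Finset.mem_filter.mp hj).2
      refine Finset.mem_filter.mpr ⟨Finset.mem_univ _, ?_⟩
      rcases hjv with h | h <;> rcases hi₁v with h' | h' <;>
        simp [h, h']
    have hmeaP : s ≤ mea eP := by
      calc s ≤ A'.card := hA's
        _ ≤ (Finset.univ.filter (fun j => eP j = eP i₁ ∨ eP j = - eP i₁)).card :=
            Finset.card_le_card hsub
        _ ≤ mea eP := Finset.le_sup (f := fun i => (Finset.univ.filter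
              (fun j => eP j = eP i ∨ eP j = - eP i)).card) (Finset.mem_univ i₁)
    have : mea eP ≤ mea dm := hmea eP hePM
    omega

/-- Let `K` be a field, `S` a finite subset of `K`, `c ∈ K`, and
`k ≥ 1` an integer. Let `c₁, …, c_{2k}` be nonzero elements of `K`. Let `T_{2k}` be
the number of `2k`-tuples `(x₁, …, x_{2k}) ∈ S^{2k}` with `c₁x₁ + ⋯ + c_{2k}x_{2k} = c`,
and let `J_{2k}` be the number of `2k`-tuples `(x₁, …, x_{2k}) ∈ S^{2k}` with
`x₁ + ⋯ + x_k = x_{k+1} + ⋯ + x_{2k}`. Then `T_{2k} ≤ J_{2k}`. -/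
theorem weighted_solutions_le_energy_even
    (K : Type) [Field K] (S : Finset K) (c : K) (k : ℕ) (hk : 1 ≤ k)
    (cs : Fin (2 * k) → K) (hcs : ∀ i, cs i ≠ 0) :
    Nat.card {x : Fin (2 * k) → K //
        (∀ i, x i ∈ S) ∧ ∑ i, cs i * x i = c} ≤
      Nat.card {x : Fin (2 * k) → K //
        (∀ i, x i ∈ S) ∧
        ∑ i ∈ Finset.univ.filter (fun i : Fin (2 * k) => (i : ℕ) < k), x i =
          ∑ i ∈ Finset.univ.filter (fun i : Fin (2 * k) => ¬ (i : ℕ) < k), x i} := by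
  classical
  rw [← cnt_J S k]
  show cnt S (Fin (2 * k)) cs c ≤ _
  set J := cnt S (Fin k ⊕ Fin k) (Sum.elim (fun _ => (1:K)) fun _ => (-1:K)) 0 with hJ
  set e : Fin k ⊕ Fin k ≃ Fin (2 * k) :=
    finSumFinEquiv.trans (finCongr (by omega : k + k = 2 * k)) with he
  set d₁ : Fin k → K := fun j => cs (e (Sum.inl j)) with hd₁
  set d₂ : Fin k → K := fun j => cs (e (Sum.inr j)) with hd₂
  have hsplit : Sum.elim d₁ d₂ = cs ∘ e := by
    funext x; rcases x with j | j <;> rfl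
  have hT : cnt S (Fin (2 * k)) cs c = cnt S (Fin k ⊕ Fin k) (Sum.elim d₁ d₂) c := by
    rw [hsplit, cnt_reindex S e cs c]
  set V : Finset K := (Finset.univ.image cs) ∪ (Finset.univ.image fun i => - cs i) with hV
  have hV0 : (0:K) ∉ V := by
    intro h
    rcases Finset.mem_union.mp h with h | h <;>
      obtain ⟨i, _, hi⟩ := Finset.mem_image.mp h
    · exact hcs i hi
    · exact hcs i (by rw [← neg_neg (cs i), hi, neg_zero])
  have hVneg : ∀ v ∈ V, -v ∈ V := by
    intro v hv
    rcases Finset.mem_union.mp hv with h | h <;>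
      obtain ⟨i, _, hi⟩ := Finset.mem_image.mp h
    · exact Finset.mem_union_right _ (Finset.mem_image.mpr ⟨i, Finset.mem_univ _, by rw [hi]⟩)
    · exact Finset.mem_union_left _ (Finset.mem_image.mpr
        ⟨i, Finset.mem_univ _, by rw [← hi, neg_neg]⟩)
  have hd₁V : ∀ j, d₁ j ∈ V := fun j =>
    Finset.mem_union_left _ (Finset.mem_image_of_mem cs (Finset.mem_univ _))
  have hd₂V : ∀ j, d₂ j ∈ V := fun j =>
    Finset.mem_union_left _ (Finset.mem_image_of_mem cs (Finset.mem_univ _))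
  have h1 : gcnt S k d₁ ≤ J := gcnt_le_J S k hk V hV0 hVneg d₁ hd₁V
  have h2 : gcnt S k d₂ ≤ J := gcnt_le_J S k hk V hV0 hVneg d₂ hd₂V
  have hcs2 : cnt S (Fin k ⊕ Fin k) (Sum.elim d₁ d₂) c ^ 2 ≤ gcnt S k d₁ * gcnt S k d₂ :=
    cnt_cs S d₁ d₂ c
  have : cnt S (Fin (2 * k)) cs c ^ 2 ≤ J ^ 2 := by
    rw [hT, sq J]
    exact le_trans hcs2 (Nat.mul_le_mul h1 h2)
  exact (Nat.pow_le_pow_iff_left (by norm_num : (2:ℕ) ≠ 0)).mp this
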